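/- If a finite simple graph Γ satisfies A(Γ;x) = A(C_t;x) for some t ≥ 3, then Γ is isomorphic to the cycle graph C_t. -/

import Mathlib

open Finset Polynomial
open scoped Classical

noncomputable section

variable {V : Type*} [Fintype V]

/-- Number of neighbors of `v` inside `S` (as an integer). -/
def degIn (G : SimpleGraph V) (S : Finset V) (v : V) : ℤ :=
  ((S.filter (fun u => G.Adj v u)).card : ℤ)

/-- Number of neighbors of `v` outside `S` (as an integer). -/
def degOut (G : SimpleGraph V) (S : Finset V) (v : V) : ℤ :=
  ((Sᶜ.filter (fun u => G.Adj v u)).card : ℤ)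

/-- The exact index of alliance of `S`. -/
def exactIndex (G : SimpleGraph V) (S : Finset V) : ℤ :=
  if h : S.Nonempty then S.inf' h (fun v => degIn G S v - degOut G S v) else 0

/-- Nonempty vertex subsets inducing a connected subgraph. -/
def goodSets (G : SimpleGraph V) : Finset (Finset V) :=
  Finset.univ.filter (fun S => S.Nonempty ∧ (G.induce (S : Set V)).Connected)

/-- The alliance polynomial. -/
def alliancePoly (G : SimpleGraph V) : Polynomial ℤ :=
  ∑ S ∈ goodSets G, X ^ (((Fintype.card V : ℤ) + exactIndex G S).toNat)

/-- `A_k(Γ)`: number of connected exact defensive `k`-alliances. -/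
def allianceCount (G : SimpleGraph V) (k : ℤ) : ℕ :=
  ((goodSets G).filter (fun S => exactIndex G S = k)).card

end

set_option linter.unusedSectionVars false

noncomputable section AP
variable {V : Type*} [Fintype V] (G : SimpleGraph V)

/-- total degree -/
def dd (v : V) : ℕ := (Finset.univ.filter (fun u => G.Adj v u)).card

variable {G}

lemma degIn_add_degOut (S : Finset V) (v : V) :
    degIn G S v + degOut G S v = (dd G v : ℤ) := by
  unfold degIn degOut dd
  rw [← Nat.cast_add]
  norm_cast
  rw [← Finset.card_union_of_disjoint]
  · congr 1
    rw [← Finset.filter_union, Finset.union_compl]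
  · exact Finset.disjoint_filter_filter (disjoint_compl_right)

lemma degIn_nonneg (S : Finset V) (v : V) : 0 ≤ degIn G S v := Int.natCast_nonneg _

lemma degOut_nonneg (S : Finset V) (v : V) : 0 ≤ degOut G S v := Int.natCast_nonneg _

lemma degOut_le (S : Finset V) (v : V) : degOut G S v ≤ (dd G v : ℤ) := by
  have := degIn_add_degOut (G := G) S v
  have h1 := degIn_nonneg (G := G) S v
  omega

lemma degIn_le (S : Finset V) (v : V) : degIn G S v ≤ (dd G v : ℤ) := by
  have := degIn_add_degOut (G := G) S v
  have h1 := degOut_nonneg (G := G) S v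
  omega

lemma dd_le (v : V) : dd G v ≤ Fintype.card V - 1 := by
  have h1 : (Finset.univ.filter (fun u => G.Adj v u)) ⊆ Finset.univ.erase v := by
    intro u hu
    simp only [Finset.mem_filter] at hu
    exact Finset.mem_erase.2 ⟨(G.adj_symm hu.2).ne, Finset.mem_univ u⟩
  calc dd G v ≤ (Finset.univ.erase v).card := Finset.card_le_card h1
    _ = Fintype.card V - 1 := by rw [Finset.card_erase_of_mem (Finset.mem_univ v), Finset.card_univ]

lemma mem_goodSets {S : Finset V} :
    S ∈ goodSets G ↔ S.Nonempty ∧ (G.induce (S : Set V)).Connected := by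
  simp [goodSets]

lemma exactIndex_le {S : Finset V} {v : V} (hv : v ∈ S) :
    exactIndex G S ≤ degIn G S v - degOut G S v := by
  rw [exactIndex, dif_pos ⟨v, hv⟩]
  exact Finset.inf'_le _ hv

lemma exists_exactIndex {S : Finset V} (hS : S.Nonempty) :
    ∃ v ∈ S, exactIndex G S = degIn G S v - degOut G S v := by
  rw [exactIndex, dif_pos hS]
  obtain ⟨v, hv, hev⟩ := Finset.exists_mem_eq_inf' hS (fun v => degIn G S v - degOut G S v)
  exact ⟨v, hv, hev⟩

lemma singleton_mem_goodSets (v : V) : ({v} : Finset V) ∈ goodSets G := by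
  rw [mem_goodSets]
  refine ⟨Finset.singleton_nonempty v, ?_⟩
  rw [Finset.coe_singleton]
  haveI : Subsingleton (({v} : Set V)) := by
    constructor
    rintro ⟨a, ha⟩ ⟨b, hb⟩
    simp only [Set.mem_singleton_iff] at ha hb
    subst ha; subst hb; rfl
  haveI : Nonempty (({v} : Set V)) := ⟨⟨v, rfl⟩⟩
  exact ⟨fun a b => by rw [Subsingleton.elim a b]⟩

lemma exactIndex_singleton (v : V) : exactIndex G {v} = -(dd G v : ℤ) := by
  have h1 : degIn G {v} v = 0 := by
    unfold degIn
    rw [Finset.filter_singleton, if_neg (G.irrefl)]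
    simp
  have h2 : degIn G {v} v + degOut G {v} v = (dd G v : ℤ) := degIn_add_degOut _ _
  obtain ⟨w, hw, hew⟩ := exists_exactIndex (G := G) (Finset.singleton_nonempty v)
  rw [Finset.mem_singleton] at hw
  subst hw
  rw [hew, h1] at *
  omega

lemma coeff_alliancePoly (e : ℕ) :
    (alliancePoly G).coeff e =
      (((goodSets G).filter
        (fun S => ((Fintype.card V : ℤ) + exactIndex G S).toNat = e)).card : ℤ) := by
  rw [alliancePoly, Polynomial.finset_sum_coeff]
  rw [Finset.card_filter]
  push_cast
  apply Finset.sum_congr rfl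
  intro S _
  rw [Polynomial.coeff_X_pow]
  by_cases h : ((Fintype.card V : ℤ) + exactIndex G S).toNat = e
  · rw [if_pos h.symm, if_pos h]
  · rw [if_neg (Ne.symm h), if_neg h]

end AP

section AP2
variable {V : Type*} {G : SimpleGraph V}

/-- From a walk crossing out of S, find a boundary vertex. -/
lemma exists_boundary_of_walk {S : Finset V} :
    ∀ {x y : V} (_ : G.Walk x y), x ∈ S → y ∉ S →
      ∃ v ∈ S, ∃ u, u ∉ S ∧ G.Adj v u := by
  intro x y w
  induction w with
  | nil => intro hx hy; exact absurd hx hy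
  | cons h p ih =>
    intro hx hy
    rename_i a b c
    by_cases hb : b ∈ S
    · exact ih hb hy
    · exact ⟨a, hx, b, hb, h⟩

/-- A walk whose support lies in a set gives reachability in the induced graph. -/
lemma reachable_induce_of_walk {s : Set V} :
    ∀ {x y : V} (w : G.Walk x y), (∀ z ∈ w.support, z ∈ s) →
      ∀ (hx : x ∈ s) (hy : y ∈ s), (G.induce s).Reachable ⟨x, hx⟩ ⟨y, hy⟩ := by
  intro x y w
  induction w with
  | nil => intro _ hx hy; rfl
  | cons h p ih =>
    rename_i a b c
    intro hsupp hx hy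
    have hb : b ∈ s := hsupp b (by simp [SimpleGraph.Walk.support_cons])
    have h1 : (G.induce s).Adj ⟨a, hx⟩ ⟨b, hb⟩ := by
      simp only [SimpleGraph.comap_adj]
      exact h
    exact (SimpleGraph.Adj.reachable h1).trans
      (ih (fun z hz => hsupp z (by simp [SimpleGraph.Walk.support_cons, hz])) hb hy)

/-- In a good set, a non-isolated vertex has a neighbor inside. -/
lemma one_le_degIn {S : Finset V} [Fintype V] (hS : S ∈ goodSets G) {v w : V}
    (hv : v ∈ S) (hw : w ∈ S) (hvw : v ≠ w) : 1 ≤ degIn G S v := by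
  rw [mem_goodSets] at hS
  obtain ⟨-, hconn⟩ := hS
  obtain ⟨p⟩ := hconn.preconnected ⟨v, hv⟩ ⟨w, hw⟩
  cases p with
  | nil => exact absurd rfl hvw
  | cons h q =>
    rename_i b
    have hb : (b : V) ∈ S := by exact_mod_cast b.2
    have hadj : G.Adj v (b : V) := by
      exact h
    unfold degIn
    have : (b : V) ∈ S.filter (fun u => G.Adj v u) := Finset.mem_filter.2 ⟨hb, hadj⟩
    have := Finset.card_pos.2 ⟨_, this⟩
    exact_mod_cast this

/-- If `degIn = 0` on a good set then it is a singleton. -/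
lemma eq_singleton_of_degIn_eq_zero {S : Finset V} [Fintype V] (hS : S ∈ goodSets G)
    {v : V} (hv : v ∈ S) (h0 : degIn G S v = 0) : S = {v} := by
  ext w
  simp only [Finset.mem_singleton]
  constructor
  · intro hw
    by_contra hne
    have := one_le_degIn hS hv hw (Ne.symm hne)
    omega
  · rintro rfl; exact hv

/-- The connected component of `v` as a finset. -/
noncomputable def compF (G : SimpleGraph V) [Fintype V] (v : V) : Finset V :=
  Finset.univ.filter (fun w => G.Reachable v w)

lemma mem_compF [Fintype V] {v w : V} : w ∈ compF G v ↔ G.Reachable v w := by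
  simp [compF]

lemma compF_mem_goodSets [Fintype V] (v : V) : compF G v ∈ goodSets G := by
  have hv : v ∈ compF G v := mem_compF.2 (SimpleGraph.Reachable.refl v)
  rw [mem_goodSets]
  refine ⟨⟨v, hv⟩, ?_⟩
  haveI : Nonempty ((compF G v : Set V)) := ⟨⟨v, hv⟩⟩
  refine ⟨?_⟩
  rintro ⟨x, hx⟩ ⟨y, hy⟩
  rw [Finset.mem_coe, mem_compF] at hx hy
  obtain ⟨w⟩ := hx.symm.trans hy
  apply reachable_induce_of_walk w
  intro z hz
  rw [Finset.mem_coe, mem_compF]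
  exact hx.trans ⟨w.takeUntil z hz⟩

lemma compF_closed [Fintype V] {v w u : V} (hw : w ∈ compF G v) (hadj : G.Adj w u) :
    u ∈ compF G v :=
  mem_compF.2 ((mem_compF.1 hw).trans hadj.reachable)

/-- On a closed set, degOut vanishes. -/
lemma degOut_eq_zero_of_closed {S : Finset V} [Fintype V]
    (hcl : ∀ w ∈ S, ∀ u, G.Adj w u → u ∈ S) {w : V} (hw : w ∈ S) : degOut G S w = 0 := by
  unfold degOut
  rw [Finset.filter_eq_empty_iff.2]
  · simp
  · intro u hu
    rw [Finset.mem_compl] at hu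
    intro hadj
    exact hu (hcl w hw u hadj)

end AP2

section AP3
variable {V : Type*} [Fintype V] {G : SimpleGraph V}

lemma neg_card_lt_exactIndex {S : Finset V} (hS : S.Nonempty) :
    -(Fintype.card V : ℤ) < exactIndex G S := by
  obtain ⟨v, hv, hev⟩ := exists_exactIndex (G := G) hS
  have h1 := degIn_nonneg (G := G) S v
  have h2 := degOut_le (G := G) S v
  have h3 := dd_le (G := G) v
  have h4 : 1 ≤ Fintype.card V := Fintype.card_pos_iff.2 ⟨v⟩
  have h5 : (dd G v : ℤ) ≤ (Fintype.card V : ℤ) - 1 := by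
    have := Nat.cast_le (α := ℤ).2 h3
    push_cast at this
    omega
  omega

lemma exp_pos {S : Finset V} (hS : S.Nonempty) :
    0 < (Fintype.card V : ℤ) + exactIndex G S := by
  have := neg_card_lt_exactIndex (G := G) hS
  omega

lemma exp_cast {S : Finset V} (hS : S.Nonempty) :
    ((((Fintype.card V : ℤ) + exactIndex G S).toNat : ℤ))
      = (Fintype.card V : ℤ) + exactIndex G S :=
  Int.toNat_of_nonneg (le_of_lt (exp_pos hS))

lemma coeff_eq_allianceCount {k : ℤ} (hk : 0 < (Fintype.card V : ℤ) + k) :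
    (alliancePoly G).coeff (((Fintype.card V : ℤ) + k).toNat)
      = (allianceCount G k : ℤ) := by
  rw [coeff_alliancePoly, allianceCount]
  congr 2
  apply Finset.filter_congr
  intro S hS
  rw [mem_goodSets] at hS
  have h1 := exp_pos (G := G) hS.1
  constructor
  · intro he
    have := congrArg (fun n : ℕ => (n : ℤ)) he
    rw [Int.toNat_of_nonneg h1.le, Int.toNat_of_nonneg hk.le] at this
    omega
  · intro he; rw [he]

lemma coeff_ne_zero_iff {e : ℕ} : (alliancePoly G).coeff e ≠ 0 ↔
    ∃ S ∈ goodSets G, ((Fintype.card V : ℤ) + exactIndex G S).toNat = e := by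
  rw [coeff_alliancePoly]
  rw [← Finset.filter_nonempty_iff]
  constructor
  · intro h
    rw [Finset.nonempty_iff_ne_empty]
    intro hemp
    rw [hemp] at h
    simp at h
  · intro ⟨S, hS⟩
    have := Finset.card_pos.2 ⟨S, hS⟩
    exact_mod_cast this.ne'

lemma exactIndex_eq_dd_of_closed {S : Finset V} (hS : S.Nonempty)
    (hcl : ∀ w ∈ S, ∀ u, G.Adj w u → u ∈ S) :
    ∃ w ∈ S, exactIndex G S = (dd G w : ℤ) := by
  obtain ⟨w, hw, hew⟩ := exists_exactIndex (G := G) hS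
  refine ⟨w, hw, ?_⟩
  have h0 : degOut G S w = 0 := degOut_eq_zero_of_closed hcl hw
  have h1 := degIn_add_degOut (G := G) S w
  omega

lemma exactIndex_le_dd_of_closed {S : Finset V}
    (hcl : ∀ w ∈ S, ∀ u, G.Adj w u → u ∈ S) {w : V} (hw : w ∈ S) :
    exactIndex G S ≤ (dd G w : ℤ) := by
  have h0 : degOut G S w = 0 := degOut_eq_zero_of_closed hcl hw
  have h1 := degIn_add_degOut (G := G) S w
  have := exactIndex_le (G := G) hw
  omega

lemma degOut_pos_of_adj {S : Finset V} {v u : V} (hu : u ∉ S) (hadj : G.Adj v u) :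
    0 < degOut G S v := by
  unfold degOut
  exact_mod_cast Finset.card_pos.2
    ⟨u, Finset.mem_filter.2 ⟨Finset.mem_compl.2 hu, hadj⟩⟩

lemma exists_boundary_degOut (hpre : G.Preconnected) {S : Finset V} (hS : S.Nonempty)
    (hne : S ≠ Finset.univ) : ∃ v ∈ S, 1 ≤ degOut G S v := by
  obtain ⟨x, hx⟩ := hS
  have : ∃ y, y ∉ S := by
    by_contra hc
    push_neg at hc
    exact hne (Finset.eq_univ_iff_forall.2 hc)
  obtain ⟨y, hy⟩ := this
  obtain ⟨w⟩ := hpre x y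
  obtain ⟨v, hv, u, hu, hadj⟩ := exists_boundary_of_walk w hx hy
  exact ⟨v, hv, degOut_pos_of_adj hu hadj⟩

lemma closed_mem_of_walk {S : Finset V} :
    ∀ {x y : V} (_ : G.Walk x y), (∀ w ∈ S, ∀ u, G.Adj w u → u ∈ S) → x ∈ S → y ∈ S := by
  intro x y w
  induction w with
  | nil => intro _ hx; exact hx
  | cons h p ih =>
    rename_i a b c
    intro hcl hx
    exact ih hcl (hcl a hx b h)

/-- If every vertex of a good set has all its neighbours inside, it is a union of
components; being connected it is the component of each of its points. -/
lemma closed_good_eq_compF {S : Finset V} (hS : S ∈ goodSets G)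
    (hcl : ∀ w ∈ S, ∀ u, G.Adj w u → u ∈ S) {v : V} (hv : v ∈ S) :
    S = compF G v := by
  rw [mem_goodSets] at hS
  ext w
  rw [mem_compF]
  constructor
  · intro hw
    obtain ⟨p⟩ := hS.2.preconnected ⟨v, hv⟩ ⟨w, hw⟩
    exact ⟨p.map (SimpleGraph.Embedding.induce (S : Set V)).toHom⟩
  · intro hr
    obtain ⟨p⟩ := hr
    exact closed_mem_of_walk p hcl hv

end AP3

section AP4
variable {V : Type*} [Fintype V] {G : SimpleGraph V}

lemma univ_mem_goodSets (hconn : G.Connected) : (Finset.univ : Finset V) ∈ goodSets G := by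
  haveI : Nonempty V := hconn.nonempty
  rw [mem_goodSets]
  refine ⟨Finset.univ_nonempty, ?_⟩
  haveI : Nonempty ((Finset.univ : Finset V) : Set V) :=
    ⟨⟨Classical.arbitrary V, Finset.mem_coe.2 (Finset.mem_univ _)⟩⟩
  refine ⟨?_⟩
  rintro ⟨x, hx⟩ ⟨y, hy⟩
  obtain ⟨w⟩ := hconn.preconnected x y
  exact reachable_induce_of_walk w (fun z _ => Finset.mem_coe.2 (Finset.mem_univ z)) hx hy

lemma dd_eq_degree [DecidableRel G.Adj] (v : V) : dd G v = G.degree v := by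
  unfold dd
  rw [SimpleGraph.degree]
  congr 1
  ext u
  simp [SimpleGraph.mem_neighborFinset]

end AP4

section AP5
variable {n : ℕ}

local notation "C" => SimpleGraph.cycleGraph (n+3)

lemma dd_cycle (v : Fin (n+3)) : dd C v = 2 := by
  rw [dd_eq_degree]
  exact SimpleGraph.cycleGraph_degree_three_le

lemma cycle_index_cases {S : Finset (Fin (n+3))} (hS : S ∈ goodSets C) :
    exactIndex C S = -2 ∨ exactIndex C S = 0 ∨ exactIndex C S = 2 := by
  obtain ⟨hne, -⟩ := mem_goodSets.1 hS
  obtain ⟨v, hv, hev⟩ := exists_exactIndex (G := C) hne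
  have h1 := degIn_add_degOut (G := C) S v
  rw [dd_cycle v] at h1
  have h2 := degIn_nonneg (G := C) S v
  have h3 := degOut_nonneg (G := C) S v
  omega

lemma cycle_index_eq_two_iff {S : Finset (Fin (n+3))} (hS : S ∈ goodSets C) :
    exactIndex C S = 2 ↔ S = Finset.univ := by
  constructor
  · intro h2
    obtain ⟨hne, -⟩ := mem_goodSets.1 hS
    have hcl : ∀ w ∈ S, ∀ u, (C).Adj w u → u ∈ S := by
      intro w hw u hadj
      have hle := exactIndex_le (G := C) hw
      have h1 := degIn_add_degOut (G := C) S w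
      rw [dd_cycle w] at h1
      have h2' := degIn_nonneg (G := C) S w
      have h2'' := degOut_nonneg (G := C) S w
      have h0 : degOut C S w = 0 := by omega
      by_contra hu
      have h4 : (0:ℤ) < degOut C S w := degOut_pos_of_adj hu hadj
      omega
    obtain ⟨v, hv⟩ := hne
    rw [closed_good_eq_compF hS hcl hv]
    ext w
    rw [mem_compF]
    simpa using SimpleGraph.cycleGraph_preconnected v w
  · rintro rfl
    have hcl : ∀ w ∈ (Finset.univ : Finset (Fin (n+3))), ∀ u, (C).Adj w u → u ∈ Finset.univ :=
      fun w _ u _ => Finset.mem_univ u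
    obtain ⟨w, -, hew⟩ := exactIndex_eq_dd_of_closed (G := C) Finset.univ_nonempty hcl
    rw [hew, dd_cycle w]
    rfl

lemma cycle_index_eq_neg_two_iff {S : Finset (Fin (n+3))} (hS : S ∈ goodSets C) :
    exactIndex C S = -2 ↔ ∃ v, S = {v} := by
  constructor
  · intro h2
    obtain ⟨hne, -⟩ := mem_goodSets.1 hS
    obtain ⟨v, hv, hev⟩ := exists_exactIndex (G := C) hne
    have h1 := degIn_add_degOut (G := C) S v
    rw [dd_cycle v] at h1
    have h3 := degOut_le (G := C) S v
    rw [dd_cycle v] at h3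
    have h0 : degIn C S v = 0 := by omega
    exact ⟨v, eq_singleton_of_degIn_eq_zero hS hv h0⟩
  · rintro ⟨v, rfl⟩
    rw [exactIndex_singleton, dd_cycle v]
    rfl

lemma cycle_coeff_bottom :
    (alliancePoly C).coeff (n+1) = ((n : ℤ) + 3) := by
  have hc : (Fintype.card (Fin (n+3)) : ℤ) = (n : ℤ) + 3 := by simp
  have he : (((Fintype.card (Fin (n+3)) : ℤ) + (-2)).toNat) = n+1 := by
    rw [hc]; omega
  rw [← he, coeff_eq_allianceCount (by rw [hc]; omega)]
  rw [allianceCount]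
  have : (goodSets C).filter (fun S => exactIndex C S = -2)
      = Finset.univ.image (fun v : Fin (n+3) => ({v} : Finset (Fin (n+3)))) := by
    ext S
    rw [Finset.mem_filter, Finset.mem_image]
    constructor
    · intro ⟨hg, hi⟩
      obtain ⟨v, rfl⟩ := (cycle_index_eq_neg_two_iff hg).1 hi
      exact ⟨v, Finset.mem_univ v, rfl⟩
    · rintro ⟨v, -, rfl⟩
      refine ⟨singleton_mem_goodSets v, ?_⟩
      rw [exactIndex_singleton, dd_cycle v]
      rfl
  rw [this, Finset.card_image_of_injective _ Finset.singleton_injective]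
  simp

lemma cycle_coeff_top :
    (alliancePoly C).coeff (n+5) = 1 := by
  have hc : (Fintype.card (Fin (n+3)) : ℤ) = (n : ℤ) + 3 := by simp
  have he : (((Fintype.card (Fin (n+3)) : ℤ) + 2).toNat) = n+5 := by
    rw [hc]; omega
  rw [← he, coeff_eq_allianceCount (by rw [hc]; omega)]
  rw [allianceCount]
  have : (goodSets C).filter (fun S => exactIndex C S = 2) = {Finset.univ} := by
    ext S
    rw [Finset.mem_filter, Finset.mem_singleton]
    constructor
    · intro ⟨hg, hi⟩
      exact (cycle_index_eq_two_iff hg).1 hi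
    · rintro rfl
      have hg : (Finset.univ : Finset (Fin (n+3))) ∈ goodSets C :=
        univ_mem_goodSets (SimpleGraph.cycleGraph_connected)
      exact ⟨hg, (cycle_index_eq_two_iff hg).2 rfl⟩
  rw [this]
  simp

lemma cycle_support {e : ℕ} (he : (alliancePoly C).coeff e ≠ 0) :
    e = n+1 ∨ e = n+3 ∨ e = n+5 := by
  obtain ⟨S, hS, hte⟩ := coeff_ne_zero_iff.1 he
  have hc : (Fintype.card (Fin (n+3)) : ℤ) = (n : ℤ) + 3 := by simp
  rcases cycle_index_cases hS with h | h | h <;> rw [h] at hte <;> rw [hc] at hte <;> omega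

end AP5

section AP5B
variable {V : Type*} [Fintype V] {G : SimpleGraph V}

lemma path_avoids_leaf {u : V} (hdd : dd G u = 1) :
    ∀ {x y : V} (p : G.Walk x y), p.IsPath → x ≠ u → y ≠ u → u ∉ p.support := by
  intro x y p
  induction p with
  | nil =>
    intro _ hx _
    simp [SimpleGraph.Walk.support_nil, hx.symm]
  | cons hadj p' ih =>
    rename_i a b c
    intro hp hx hy
    have hp' : p'.IsPath := hp.of_cons
    have hanotin : a ∉ p'.support := (SimpleGraph.Walk.cons_isPath_iff _ _).1 hp |>.2
    rw [SimpleGraph.Walk.support_cons]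
    intro hmem
    rcases List.mem_cons.1 hmem with rfl | hmem'
    · exact hx rfl
    · by_cases hb : b = u
      · subst hb
        cases p' with
        | nil => exact hy rfl
        | cons hadj2 q =>
          rename_i d
          have hdmem : d ∈ (SimpleGraph.Walk.cons hadj2 q).support := by
            rw [SimpleGraph.Walk.support_cons]
            exact List.mem_cons.2 (Or.inr (SimpleGraph.Walk.start_mem_support q))
          have hda : d ≠ a := fun hc => hanotin (hc ▸ hdmem)
          have hsub : ({a, d} : Finset V) ⊆ Finset.univ.filter (fun z => G.Adj b z) := by
            intro z hz
            rw [Finset.mem_insert, Finset.mem_singleton] at hz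
            rw [Finset.mem_filter]
            rcases hz with rfl | rfl
            · exact ⟨Finset.mem_univ _, hadj.symm⟩
            · exact ⟨Finset.mem_univ _, hadj2⟩
          have hcard2 : ({a, d} : Finset V).card = 2 := by
            rw [Finset.card_insert_of_notMem (by simpa using hda.symm), Finset.card_singleton]
          have := Finset.card_le_card hsub
          rw [hcard2] at this
          have hdd' := hdd
          unfold dd at hdd'
          omega
      · exact ih hp' hb hy hmem'

lemma erase_leaf_connected {u : V} (hconn : G.Connected) (hdd : dd G u = 1)
    (hcard : 2 ≤ Fintype.card V) :
    (G.induce ((Finset.univ.erase u : Finset V) : Set V)).Connected := by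
  have hne : (Finset.univ.erase u).Nonempty := by
    rw [← Finset.card_pos, Finset.card_erase_of_mem (Finset.mem_univ u), Finset.card_univ]
    omega
  obtain ⟨x0, hx0⟩ := hne
  haveI : Nonempty ((Finset.univ.erase u : Finset V) : Set V) := ⟨⟨x0, by simpa using hx0⟩⟩
  refine ⟨?_⟩
  rintro ⟨x, hx⟩ ⟨y, hy⟩
  have hxu : x ≠ u := by
    simp only [Finset.coe_erase, Set.mem_diff, Finset.coe_univ, Set.mem_singleton_iff] at hx
    exact hx.2
  have hyu : y ≠ u := by
    simp only [Finset.coe_erase, Set.mem_diff, Finset.coe_univ, Set.mem_singleton_iff] at hy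
    exact hy.2
  obtain ⟨w⟩ := hconn.preconnected x y
  have hpath := w.toPath
  have havoid : u ∉ (w.toPath : G.Walk x y).support :=
    path_avoids_leaf hdd _ (w.toPath).2 hxu hyu
  apply reachable_induce_of_walk (w.toPath : G.Walk x y)
  intro z hz
  have hzu : z ≠ u := fun hc => havoid (hc ▸ hz)
  simp only [Finset.coe_erase, Set.mem_diff, Finset.coe_univ, Set.mem_singleton_iff]
  exact ⟨Set.mem_univ z, hzu⟩

end AP5B

section AP6
variable {V : Type*} [Fintype V] {G : SimpleGraph V}

/-- The other neighbour of `b`, besides `a`. -/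
noncomputable def other (G : SimpleGraph V) (a b : V) : V :=
  if h : ∃ c, G.Adj b c ∧ c ≠ a ∧ ∀ x, G.Adj b x → x = a ∨ x = c then h.choose else a

lemma other_spec (h2 : ∀ v, dd G v = 2) {a b : V} (hadj : G.Adj b a) :
    G.Adj b (other G a b) ∧ other G a b ≠ a ∧
      ∀ x, G.Adj b x → x = a ∨ x = other G a b := by
  have hex : ∃ c, G.Adj b c ∧ c ≠ a ∧ ∀ x, G.Adj b x → x = a ∨ x = c := by
    have hcard : (Finset.univ.filter (fun u => G.Adj b u)).card = 2 := h2 b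
    obtain ⟨p, q, hpq, hset⟩ := Finset.card_eq_two.1 hcard
    have ha : a ∈ (Finset.univ.filter (fun u => G.Adj b u)) := by
      simp [hadj]
    rw [hset, Finset.mem_insert, Finset.mem_singleton] at ha
    have hmem : ∀ x, G.Adj b x → x = p ∨ x = q := by
      intro x hx
      have : x ∈ (Finset.univ.filter (fun u => G.Adj b u)) := by simp [hx]
      rw [hset] at this
      simpa using this
    have hp : G.Adj b p := by
      have : p ∈ (Finset.univ.filter (fun u => G.Adj b u)) := by rw [hset]; simp
      simpa using this
    have hq : G.Adj b q := by
      have : q ∈ (Finset.univ.filter (fun u => G.Adj b u)) := by rw [hset]; simp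
      simpa using this
    rcases ha with rfl | rfl
    · exact ⟨q, hq, hpq.symm, hmem⟩
    · refine ⟨p, hp, hpq, fun x hx => (hmem x hx).symm⟩
  rw [other, dif_pos hex]
  exact hex.choose_spec

variable (G) in
/-- iterate pairs of consecutive vertices -/
noncomputable def pairSeq (v0 v1 : V) (k : ℕ) : V × V :=
  (fun p => (p.2, other G p.1 p.2))^[k] (v0, v1)

variable (G) in
noncomputable def seqv (v0 v1 : V) (k : ℕ) : V := (pairSeq G v0 v1 k).1

section walkaround
variable (h2 : ∀ v, dd G v = 2) {v0 v1 : V} (hadj01 : G.Adj v0 v1)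

lemma pairSeq_succ (k : ℕ) :
    pairSeq G v0 v1 (k+1) =
      ((pairSeq G v0 v1 k).2, other G (pairSeq G v0 v1 k).1 (pairSeq G v0 v1 k).2) := by
  rw [pairSeq, Function.iterate_succ_apply', pairSeq]

lemma seqv_succ' (k : ℕ) : seqv G v0 v1 (k+1) = (pairSeq G v0 v1 k).2 := by
  rw [seqv, pairSeq_succ]

include h2 hadj01

lemma pairSeq_adj (k : ℕ) : G.Adj (pairSeq G v0 v1 k).1 (pairSeq G v0 v1 k).2 := by
  induction k with
  | zero => exact hadj01
  | succ k ih =>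
    rw [pairSeq_succ]
    exact (other_spec h2 ih.symm).1

lemma seqv_adj (k : ℕ) : G.Adj (seqv G v0 v1 k) (seqv G v0 v1 (k+1)) := by
  rw [seqv, seqv_succ']
  exact pairSeq_adj h2 hadj01 k

lemma seqv_step_ne (k : ℕ) : seqv G v0 v1 (k+2) ≠ seqv G v0 v1 k := by
  rw [seqv_succ', pairSeq_succ, seqv]
  exact (other_spec h2 (pairSeq_adj h2 hadj01 k).symm).2.1

lemma seqv_nbrs (k : ℕ) :
    Finset.univ.filter (fun u => G.Adj (seqv G v0 v1 (k+1)) u)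
      = {seqv G v0 v1 k, seqv G v0 v1 (k+2)} := by
  have h1 : G.Adj (seqv G v0 v1 (k+1)) (seqv G v0 v1 k) := (seqv_adj h2 hadj01 k).symm
  have h2' : G.Adj (seqv G v0 v1 (k+1)) (seqv G v0 v1 (k+2)) := seqv_adj h2 hadj01 (k+1)
  have hne : seqv G v0 v1 k ≠ seqv G v0 v1 (k+2) := (seqv_step_ne h2 hadj01 k).symm
  symm
  apply Finset.eq_of_subset_of_card_le
  · intro x hx
    rw [Finset.mem_insert, Finset.mem_singleton] at hx
    rcases hx with rfl | rfl <;> simp [h1, h2']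
  · have hdd := h2 (seqv G v0 v1 (k+1))
    unfold dd at hdd
    rw [hdd, Finset.card_insert_of_notMem (by simpa using hne), Finset.card_singleton]

lemma seqv_nbr_mem {k : ℕ} {x : V} (hx : G.Adj (seqv G v0 v1 (k+1)) x) :
    x = seqv G v0 v1 k ∨ x = seqv G v0 v1 (k+2) := by
  have : x ∈ Finset.univ.filter (fun u => G.Adj (seqv G v0 v1 (k+1)) u) := by simp [hx]
  rw [seqv_nbrs h2 hadj01 k] at this
  simpa using this

end walkaround
end AP6

section AP6B
variable {V : Type*} [Fintype V] {G : SimpleGraph V}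

lemma iso_cycle_of_two_regular {n : ℕ} (hconn : G.Connected) (h2 : ∀ v, dd G v = 2)
    (hm : Fintype.card V = n+3) : Nonempty (G ≃g SimpleGraph.cycleGraph (n+3)) := by
  haveI : Nonempty V := hconn.nonempty
  obtain ⟨v0⟩ := (inferInstance : Nonempty V)
  have hv1 : ∃ v1, G.Adj v0 v1 := by
    have hne : (Finset.univ.filter (fun u => G.Adj v0 u)).Nonempty := by
      rw [← Finset.card_pos]
      have := h2 v0; unfold dd at this; omega
    obtain ⟨v1, hv1⟩ := hne
    exact ⟨v1, (Finset.mem_filter.1 hv1).2⟩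
  obtain ⟨v1, hadj01⟩ := hv1
  have key : ∃ j, j ≤ n + 3 ∧ (∃ i, i < j ∧ seqv G v0 v1 i = seqv G v0 v1 j) ∧
      (∀ a b, a < b → b < j → seqv G v0 v1 a ≠ seqv G v0 v1 b) := by
    have hrep0 : ∃ jw, (∃ i, i < jw ∧ seqv G v0 v1 i = seqv G v0 v1 jw) ∧ jw ≤ n + 3 := by
      have hcard : (Finset.univ : Finset V).card < (Finset.range (n+4)).card := by
        rw [Finset.card_univ, hm, Finset.card_range]; omega
      obtain ⟨a, ha, b, hb, hab, hfab⟩ :=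
        Finset.exists_ne_map_eq_of_card_lt_of_maps_to hcard
          (fun (i : ℕ) (_ : i ∈ Finset.range (n+4)) => Finset.mem_univ (seqv G v0 v1 i))
      rw [Finset.mem_range] at ha hb
      rcases lt_or_gt_of_ne hab with hl | hl
      · exact ⟨b, ⟨a, hl, hfab⟩, by omega⟩
      · exact ⟨a, ⟨b, hl, hfab.symm⟩, by omega⟩
    have hrep : ∃ j, ∃ i, i < j ∧ seqv G v0 v1 i = seqv G v0 v1 j := by
      obtain ⟨jw, hjw, -⟩ := hrep0
      exact ⟨jw, hjw⟩
    obtain ⟨jw, hjw, hjwN⟩ := hrep0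
    exact ⟨Nat.find hrep, le_trans (Nat.find_min' hrep hjw) hjwN, Nat.find_spec hrep,
      fun a b hab hbj hfe => Nat.find_min hrep hbj ⟨a, hab, hfe⟩⟩
  obtain ⟨j, hjN, ⟨i0, hi0lt, hi0⟩, distinct⟩ := key
  -- the repeat closes up at 0
  have hi00 : i0 = 0 := by
    by_contra hne0
    obtain ⟨i0', rfl⟩ := Nat.exists_eq_succ_of_ne_zero hne0
    obtain ⟨j', rfl⟩ := Nat.exists_eq_succ_of_ne_zero (by omega : j ≠ 0)
    have hadjj : G.Adj (seqv G v0 v1 (i0' + 1)) (seqv G v0 v1 j') := by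
      have := seqv_adj h2 hadj01 j'
      rw [← hi0] at this
      exact this.symm
    have hi0j' : i0' + 1 ≠ j' := by
      intro he
      subst he
      exact (seqv_adj h2 hadj01 (i0' + 1)).ne hi0
    rcases seqv_nbr_mem h2 hadj01 (k := i0') hadjj with hc | hc
    · exact distinct i0' j' (by omega) (by omega) hc.symm
    · rcases Nat.lt_or_ge (i0' + 2) j' with hlt | hge
      · exact distinct (i0' + 2) j' hlt (by omega) hc.symm
      · have he2 : j' = i0' + 2 := by omega
        rw [he2] at hi0
        exact seqv_step_ne h2 hadj01 (i0' + 1) hi0.symm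
  subst hi00
  have hj3 : 3 ≤ j := by
    rcases Nat.lt_or_ge j 3 with hlt | hge
    · interval_cases j
      · have h01 : G.Adj (seqv G v0 v1 0) (seqv G v0 v1 1) := seqv_adj h2 hadj01 0
        exact absurd hi0 h01.ne
      · exact absurd hi0.symm (seqv_step_ne h2 hadj01 0)
    · exact hge
  -- neighbours of the base point
  have hnbr0 : ∀ {jj : ℕ}, jj + 1 = j → Finset.univ.filter (fun u => G.Adj (seqv G v0 v1 0) u)
      = {seqv G v0 v1 1, seqv G v0 v1 jj} := by
    intro jj hjj
    have h1 : G.Adj (seqv G v0 v1 0) (seqv G v0 v1 1) := seqv_adj h2 hadj01 0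
    have hb : G.Adj (seqv G v0 v1 0) (seqv G v0 v1 jj) := by
      have := seqv_adj h2 hadj01 jj
      rw [hjj, ← hi0] at this
      exact this.symm
    have hne : seqv G v0 v1 1 ≠ seqv G v0 v1 jj := distinct 1 jj (by omega) (by omega)
    symm
    apply Finset.eq_of_subset_of_card_le
    · intro x hx
      rw [Finset.mem_insert, Finset.mem_singleton] at hx
      rw [Finset.mem_filter]
      rcases hx with hx | hx <;> rw [hx]
      · exact ⟨Finset.mem_univ _, h1⟩
      · exact ⟨Finset.mem_univ _, hb⟩
    · have hdd := h2 (seqv G v0 v1 0)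
      unfold dd at hdd
      rw [hdd, Finset.card_insert_of_notMem (by simpa using hne), Finset.card_singleton]
  -- the cycle closes after exactly n+3 steps
  have hjN' : j = n + 3 := by
    by_contra hne
    have hjltN : j < n + 3 := by omega
    set S : Finset V := (Finset.range j).image (seqv G v0 v1) with hS
    have hinj : Set.InjOn (seqv G v0 v1) (Finset.range j) := by
      intro a ha b hb hfe
      simp only [Finset.coe_range, Set.mem_Iio] at ha hb
      rcases Nat.lt_trichotomy a b with hlt | heq | hgt
      · exact absurd hfe (distinct a b hlt hb)
      · exact heq
      · exact absurd hfe.symm (distinct b a hgt ha)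
    have hcardS : S.card = j := by
      rw [hS, Finset.card_image_of_injOn hinj, Finset.card_range]
    have hmem' : ∀ k, k < j → seqv G v0 v1 k ∈ S := by
      intro k hk
      exact Finset.mem_image.2 ⟨k, Finset.mem_range.2 hk, rfl⟩
    have hSne : S.Nonempty := ⟨seqv G v0 v1 0, hmem' 0 (by omega)⟩
    have hSneq : S ≠ Finset.univ := by
      intro hequ
      rw [hequ, Finset.card_univ, hm] at hcardS
      omega
    obtain ⟨v, hvS, hdo⟩ := exists_boundary_degOut hconn.preconnected hSne hSneq
    have hub : ∃ u, u ∉ S ∧ G.Adj v u := by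
      have hpos : 0 < (Sᶜ.filter (fun u => G.Adj v u)).card := by
        unfold degOut at hdo; exact_mod_cast lt_of_lt_of_le zero_lt_one hdo
      obtain ⟨u, hu⟩ := Finset.card_pos.1 hpos
      rw [Finset.mem_filter, Finset.mem_compl] at hu
      exact ⟨u, hu.1, hu.2⟩
    obtain ⟨u, huS, hadj⟩ := hub
    obtain ⟨nn, hnn, rfl⟩ := Finset.mem_image.1 hvS
    rw [Finset.mem_range] at hnn
    apply huS
    cases nn with
    | zero =>
      obtain ⟨jj, hjj⟩ : ∃ jj, jj + 1 = j := ⟨j - 1, by omega⟩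
      have hu : u ∈ Finset.univ.filter (fun x => G.Adj (seqv G v0 v1 0) x) :=
        Finset.mem_filter.2 ⟨Finset.mem_univ u, hadj⟩
      rw [hnbr0 hjj, Finset.mem_insert, Finset.mem_singleton] at hu
      rcases hu with rfl | rfl
      · exact hmem' 1 (by omega)
      · exact hmem' jj (by omega)
    | succ nn' =>
      rcases seqv_nbr_mem h2 hadj01 (k := nn') hadj with rfl | rfl
      · exact hmem' nn' (by omega)
      · rcases Nat.lt_or_ge (nn' + 2) j with hlt | hge
        · exact hmem' (nn' + 2) hlt
        · have he2 : nn' + 2 = j := by omega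
          rw [he2, ← hi0]
          exact hmem' 0 (by omega)
  subst hjN'
  -- define the bijection
  set F : Fin (n+3) → V := fun i => seqv G v0 v1 i.val with hF
  have hFinj : Function.Injective F := by
    intro a b hab
    rcases Nat.lt_trichotomy a.val b.val with hlt | heq | hgt
    · exact absurd hab (distinct a.val b.val hlt b.isLt)
    · exact Fin.ext heq
    · exact absurd hab.symm (distinct b.val a.val hgt a.isLt)
  have hFbij : Function.Bijective F :=
    (Fintype.bijective_iff_injective_and_card F).2 ⟨hFinj, by simp [hm]⟩
  -- adjacency along the cycle
  have hFadj : ∀ i : Fin (n+3), G.Adj (F i) (F (i+1)) := by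
    intro i
    rw [hF]
    simp only []
    rcases Nat.lt_or_ge (i.val + 1) (n+3) with hlt | hge
    · have hv : ((i+1 : Fin (n+3))).val = i.val + 1 := by
        rw [Fin.val_add_one]
        rw [if_neg]
        intro hlast
        rw [hlast] at hlt
        simp [Fin.last] at hlt
      rw [hv]
      exact seqv_adj h2 hadj01 i.val
    · have hival : i.val = n + 2 := by have := i.isLt; omega
      have hlast : i = Fin.last (n+2) := Fin.ext (by simpa [Fin.last] using hival)
      have hv : ((i+1 : Fin (n+3))).val = 0 := by
        rw [Fin.val_add_one, if_pos hlast]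
      rw [hv, hival]
      have hstep : G.Adj (seqv G v0 v1 (n+2)) (seqv G v0 v1 (n+3)) :=
        seqv_adj h2 hadj01 (n+2)
      rw [← hi0] at hstep
      exact hstep
  have hsub : ∀ i : Fin (n+3), i - 1 + 1 = i := fun i => by open Fin.CommRing in ring
  have h2ne : (2 : Fin (n+3)) ≠ 0 := by
    intro hc
    have hval := congrArg Fin.val hc
    rw [Fin.val_two] at hval
    simp at hval
  have hpm : ∀ i : Fin (n+3), i - 1 ≠ i + 1 := by
    intro i hc
    apply h2ne
    have := congrArg (fun x => x - (i - 1)) hc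
    simp only [sub_self] at this
    have h3 : i + 1 - (i - 1) = 2 := by open Fin.CommRing in ring
    rw [h3] at this
    exact this.symm
  have hnbrF : ∀ i : Fin (n+3), Finset.univ.filter (fun u => G.Adj (F i) u)
      = {F (i - 1), F (i + 1)} := by
    intro i
    have ha : G.Adj (F i) (F (i-1)) := by
      have := hFadj (i-1)
      rw [hsub i] at this
      exact this.symm
    have hb : G.Adj (F i) (F (i+1)) := hFadj i
    have hne : F (i-1) ≠ F (i+1) := fun hc => hpm i (hFinj hc)
    symm
    apply Finset.eq_of_subset_of_card_le
    · intro x hx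
      rw [Finset.mem_insert, Finset.mem_singleton] at hx
      rw [Finset.mem_filter]
      rcases hx with hx | hx <;> rw [hx]
      · exact ⟨Finset.mem_univ _, ha⟩
      · exact ⟨Finset.mem_univ _, hb⟩
    · have hdd := h2 (F i)
      unfold dd at hdd
      rw [hdd, Finset.card_insert_of_notMem (by simpa using hne), Finset.card_singleton]
  -- assemble the isomorphism
  have hcadj : ∀ u v : Fin (n+3),
      (SimpleGraph.cycleGraph (n+3)).Adj u v ↔ u - v = 1 ∨ v - u = 1 := by
    intro u v
    exact SimpleGraph.cycleGraph_adj (n := n+1)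
  refine ⟨((⟨Equiv.ofBijective F hFbij, ?_⟩ :
    SimpleGraph.cycleGraph (n+3) ≃g G)).symm⟩
  intro a b
  simp only [Equiv.ofBijective_apply]
  rw [hcadj a b]
  constructor
  · intro hadj
    have hFb : F b ∈ Finset.univ.filter (fun u => G.Adj (F a) u) :=
      Finset.mem_filter.2 ⟨Finset.mem_univ _, hadj⟩
    rw [hnbrF a, Finset.mem_insert, Finset.mem_singleton] at hFb
    rcases hFb with hFb | hFb
    · left
      have := hFinj hFb
      rw [this]
      open Fin.CommRing in ring
    · right
      have := hFinj hFb
      rw [this]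
      open Fin.CommRing in ring
  · intro hc
    rcases hc with hc | hc
    · have : a = b + 1 := by
        have := congrArg (fun x => x + b) hc
        simpa [sub_add_cancel, add_comm] using this
      rw [this]
      exact (hFadj b).symm
    · have : b = a + 1 := by
        have := congrArg (fun x => x + a) hc
        simpa [sub_add_cancel, add_comm] using this
      rw [this]
      exact hFadj a

end AP6B

/-- cycle graphs are characterized by their alliance polynomials. -/
theorem eq_cycleGraph_of_alliancePoly {V : Type*} [Fintype V] (G : SimpleGraph V)
    (t : ℕ) (ht : 3 ≤ t)
    (h : alliancePoly G = alliancePoly (SimpleGraph.cycleGraph t)) :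
    Nonempty (G ≃g SimpleGraph.cycleGraph t) := by
  obtain ⟨n, rfl⟩ : ∃ n, t = n + 3 := ⟨t - 3, by omega⟩
  have hb : (alliancePoly G).coeff (n+1) = (n:ℤ)+3 := by rw [h]; exact cycle_coeff_bottom
  have htop : (alliancePoly G).coeff (n+5) = 1 := by rw [h]; exact cycle_coeff_top
  have hsupp : ∀ e, (alliancePoly G).coeff e ≠ 0 → e = n+1 ∨ e = n+3 ∨ e = n+5 := by
    intro e he
    rw [h] at he
    exact cycle_support he
  -- V is nonempty
  obtain ⟨S₁, hS₁, hS₁e⟩ := coeff_ne_zero_iff.1 (show (alliancePoly G).coeff (n+1) ≠ 0 by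
    rw [hb]; positivity)
  haveI hVne : Nonempty V := by
    obtain ⟨⟨v, -⟩, -⟩ := mem_goodSets.1 hS₁
    exact ⟨v⟩
  obtain ⟨vmax, -, hvmax⟩ :=
    Finset.exists_mem_eq_sup (Finset.univ : Finset V) Finset.univ_nonempty (dd G)
  set Δ : ℕ := Finset.univ.sup (dd G) with hΔdef
  have hdle : ∀ v, dd G v ≤ Δ := fun v => Finset.le_sup (Finset.mem_univ v)
  have hcard1 : 1 ≤ Fintype.card V := Fintype.card_pos
  have hΔm : Δ + 1 ≤ Fintype.card V := by
    have h1 := dd_le (G := G) vmax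
    rw [← hvmax] at h1
    omega
  -- lower bound for the index
  have hk_lb : ∀ S ∈ goodSets G, -(Δ:ℤ) ≤ exactIndex G S := by
    intro S hS
    obtain ⟨hne', -⟩ := mem_goodSets.1 hS
    obtain ⟨v, hv, hev⟩ := exists_exactIndex (G := G) hne'
    have h1 := degIn_nonneg (G := G) S v
    have h2 := degOut_le (G := G) S v
    have h3 : (dd G v : ℤ) ≤ (Δ : ℤ) := by exact_mod_cast hdle v
    omega
  -- exponents lie in the support of the cycle polynomial
  have hexp : ∀ S ∈ goodSets G,
      (((Fintype.card V : ℤ) + exactIndex G S).toNat = n+1 ∨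
       ((Fintype.card V : ℤ) + exactIndex G S).toNat = n+3 ∨
       ((Fintype.card V : ℤ) + exactIndex G S).toNat = n+5) := by
    intro S hS
    exact hsupp _ (coeff_ne_zero_iff.2 ⟨S, hS, rfl⟩)
  -- identify the bottom exponent : card V - Δ = n + 1
  have hmZ : (Fintype.card V : ℤ) = (n:ℤ) + 1 + Δ := by
    have hsm : ({vmax} : Finset V) ∈ goodSets G := singleton_mem_goodSets vmax
    have hsi : exactIndex G {vmax} = -(Δ:ℤ) := by
      rw [exactIndex_singleton, ← hvmax]
    have h1 := hexp _ hsm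
    rw [hsi] at h1
    have h2 : (0:ℤ) < (Fintype.card V : ℤ) + -(Δ:ℤ) := by
      have : ((Δ:ℤ)) + 1 ≤ (Fintype.card V : ℤ) := by exact_mod_cast hΔm
      omega
    have h3 : ((((Fintype.card V : ℤ) + -(Δ:ℤ)).toNat : ℤ))
        = (Fintype.card V : ℤ) + -(Δ:ℤ) := Int.toNat_of_nonneg h2.le
    -- the set S₁ has exponent n+1
    obtain ⟨hne1, -⟩ := mem_goodSets.1 hS₁
    have h4 : ((Fintype.card V : ℤ) + exactIndex G S₁) = (n:ℤ)+1 := by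
      have := exp_cast (G := G) hne1
      rw [hS₁e] at this
      push_cast at this
      omega
    have h5 := hk_lb S₁ hS₁
    rcases h1 with h1 | h1 | h1 <;> omega
  -- index classification
  have hF1 : ∀ S ∈ goodSets G, exactIndex G S = -(Δ:ℤ) ∨
      exactIndex G S = 2-(Δ:ℤ) ∨ exactIndex G S = 4-(Δ:ℤ) := by
    intro S hS
    obtain ⟨hne', -⟩ := mem_goodSets.1 hS
    have h1 := hexp S hS
    have h2 := exp_cast (G := G) (S := S) hne'
    rcases h1 with h1 | h1 | h1 <;> rw [h1] at h2 <;> push_cast at h2 <;> omega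
  -- degree classification
  have hdeg : ∀ v : V, (dd G v : ℤ) = (Δ:ℤ) ∨ (dd G v : ℤ) = (Δ:ℤ)-2 ∨
      (dd G v : ℤ) = (Δ:ℤ)-4 := by
    intro v
    have h1 := hF1 _ (singleton_mem_goodSets (G := G) v)
    rw [exactIndex_singleton] at h1
    omega
  -- the number of maximal-degree vertices is n+3
  have hcount : ((Finset.univ.filter (fun v => dd G v = Δ)).card : ℤ) = (n:ℤ)+3 := by
    have h2 : (0:ℤ) < (Fintype.card V : ℤ) + -(Δ:ℤ) := by omega
    have h3 : (((Fintype.card V : ℤ) + -(Δ:ℤ)).toNat) = n+1 := by omega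
    have h4 := coeff_eq_allianceCount (G := G) (k := -(Δ:ℤ)) h2
    rw [h3, hb] at h4
    rw [allianceCount] at h4
    have h5 : (goodSets G).filter (fun S => exactIndex G S = -(Δ:ℤ))
        = (Finset.univ.filter (fun v => dd G v = Δ)).image (fun v => ({v} : Finset V)) := by
      ext S
      rw [Finset.mem_filter, Finset.mem_image]
      constructor
      · intro ⟨hg, hi⟩
        obtain ⟨hne', -⟩ := mem_goodSets.1 hg
        obtain ⟨v, hv, hev⟩ := exists_exactIndex (G := G) hne'
        have h6 := degIn_nonneg (G := G) S v
        have h7 := degOut_le (G := G) S v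
        have h8 : (dd G v : ℤ) ≤ (Δ : ℤ) := by exact_mod_cast hdle v
        have h9 : degIn G S v = 0 := by omega
        have h10 : (dd G v : ℤ) = (Δ:ℤ) := by omega
        refine ⟨v, Finset.mem_filter.2 ⟨Finset.mem_univ v, by exact_mod_cast h10⟩, ?_⟩
        exact (eq_singleton_of_degIn_eq_zero hg hv h9).symm
      · rintro ⟨v, hv, rfl⟩
        have hvd : dd G v = Δ := (Finset.mem_filter.1 hv).2
        refine ⟨singleton_mem_goodSets v, ?_⟩
        rw [exactIndex_singleton, hvd]
    rw [h5, Finset.card_image_of_injective _ Finset.singleton_injective] at h4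
    exact h4.symm
  have hcount' : (Finset.univ.filter (fun v => dd G v = Δ)).card = n+3 := by
    exact_mod_cast hcount
  have hmax_le : (Finset.univ.filter (fun v => dd G v = Δ)).card ≤ Fintype.card V := by
    rw [← Finset.card_univ]
    exact Finset.card_le_card (Finset.filter_subset _ _)
  have hΔ2 : 2 ≤ Δ := by
    rw [hcount'] at hmax_le
    have : ((n:ℤ)+3) ≤ (Fintype.card V : ℤ) := by exact_mod_cast hmax_le
    omega
  -- the top coefficient
  have htopcount : (allianceCount G (4-(Δ:ℤ)) : ℤ) = 1 := by
    have h2 : (0:ℤ) < (Fintype.card V : ℤ) + (4-(Δ:ℤ)) := by omega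
    have h3 : (((Fintype.card V : ℤ) + (4-(Δ:ℤ))).toNat) = n+5 := by omega
    have h4 := coeff_eq_allianceCount (G := G) (k := 4-(Δ:ℤ)) h2
    rw [h3, htop] at h4
    exact h4.symm
  -- Δ ≤ 4 via the component of a maximal-degree vertex
  have hΔ4 : Δ ≤ 4 := by
    have hvC : vmax ∈ compF G vmax := mem_compF.2 (SimpleGraph.Reachable.refl vmax)
    have hCgood := compF_mem_goodSets (G := G) vmax
    obtain ⟨w, hw, hew⟩ := exactIndex_eq_dd_of_closed (G := G) ⟨vmax, hvC⟩
      (fun a ha b hb => compF_closed ha hb)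
    have h1 := hF1 _ hCgood
    have h2 := hdeg w
    rw [hew] at h1
    omega
  -- now split on Δ
  have hΔcases : Δ = 2 ∨ Δ = 3 ∨ Δ = 4 := by omega
  -- an auxiliary fact : a vertex reachable from a different vertex has positive degree
  have hreach_deg : ∀ {a b : V}, a ≠ b → G.Reachable a b → 1 ≤ dd G b := by
    intro a b hab hr
    obtain ⟨p⟩ := hr.symm
    cases p with
    | nil => exact absurd rfl hab.symm
    | cons hadj q =>
      rename_i c
      have : c ∈ Finset.univ.filter (fun z => G.Adj b z) := by
        rw [Finset.mem_filter]
        exact ⟨Finset.mem_univ _, hadj⟩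
      have := Finset.card_pos.2 ⟨c, this⟩
      unfold dd
      omega
  rcases hΔcases with hΔv | hΔv | hΔv
  · -- Δ = 2 : G is 2-regular and connected, so it is the cycle
    have hmV : Fintype.card V = n+3 := by
      have : (Fintype.card V : ℤ) = (n:ℤ)+3 := by rw [hmZ, hΔv]; push_cast; ring
      exact_mod_cast this
    have hall : ∀ v : V, dd G v = 2 := by
      have hequ : Finset.univ.filter (fun v => dd G v = Δ) = Finset.univ := by
        apply Finset.eq_univ_of_card
        rw [hcount', hmV]
      intro v
      have hv : v ∈ Finset.univ.filter (fun v => dd G v = Δ) := by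
        rw [hequ]; exact Finset.mem_univ v
      rw [← hΔv]
      exact (Finset.mem_filter.1 hv).2
    have hcompmem : ∀ x : V, compF G x ∈
        (goodSets G).filter (fun S => exactIndex G S = 4-(Δ:ℤ)) := by
      intro x
      have hxC : x ∈ compF G x := mem_compF.2 (SimpleGraph.Reachable.refl x)
      have hCgood := compF_mem_goodSets (G := G) x
      obtain ⟨w, hw, hew⟩ := exactIndex_eq_dd_of_closed (G := G) ⟨x, hxC⟩
        (fun a ha b hb => compF_closed ha hb)
      rw [Finset.mem_filter]
      refine ⟨hCgood, ?_⟩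
      rw [hew, hall w, hΔv]
      norm_num
    have hcard_one : ((goodSets G).filter (fun S => exactIndex G S = 4-(Δ:ℤ))).card ≤ 1 := by
      have : (allianceCount G (4-(Δ:ℤ)) : ℤ) = 1 := htopcount
      rw [allianceCount] at this
      omega
    have hpre : G.Preconnected := by
      intro x y
      have hxy : compF G x = compF G y :=
        Finset.card_le_one.1 hcard_one _ (hcompmem x) _ (hcompmem y)
      have : y ∈ compF G x := by
        rw [hxy]
        exact mem_compF.2 (SimpleGraph.Reachable.refl y)
      exact mem_compF.1 this
    exact iso_cycle_of_two_regular ⟨hpre⟩ hall hmV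
  · -- Δ = 3 : contradiction
    exfalso
    have hmV : Fintype.card V = n+4 := by
      have : (Fintype.card V : ℤ) = (n:ℤ)+4 := by rw [hmZ, hΔv]; push_cast; ring
      exact_mod_cast this
    have hdeg3 : ∀ v : V, dd G v = 3 ∨ dd G v = 1 := by
      intro v
      have h1 := hdeg v
      rw [hΔv] at h1
      have h2 : (0:ℤ) ≤ (dd G v : ℤ) := Int.natCast_nonneg _
      rcases h1 with h1 | h1 | h1
      · left; exact_mod_cast h1
      · right; exact_mod_cast (by omega : (dd G v : ℤ) = 1)
      · omega
    -- there is a unique vertex of degree 1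
    have hfilter1 : (Finset.univ.filter (fun v => dd G v = 1)).card = 1 := by
      have hdisj : Finset.univ.filter (fun v => dd G v = 1)
          = Finset.univ \ Finset.univ.filter (fun v => dd G v = Δ) := by
        ext v
        simp only [Finset.mem_filter, Finset.mem_sdiff, Finset.mem_univ, true_and]
        rw [hΔv]
        constructor
        · intro hd
          omega
        · intro hd
          rcases hdeg3 v with h1 | h1
          · omega
          · exact h1
      rw [hdisj, Finset.card_sdiff_of_subset (Finset.filter_subset _ _), hcount', Finset.card_univ, hmV]
      omega
    obtain ⟨u, hu⟩ := Finset.card_eq_one.1 hfilter1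
    have hudeg : dd G u = 1 := by
      have : u ∈ Finset.univ.filter (fun v => dd G v = 1) := by
        rw [hu]; exact Finset.mem_singleton_self u
      exact (Finset.mem_filter.1 this).2
    have huniq : ∀ x : V, dd G x = 1 → x = u := by
      intro x hx
      have : x ∈ Finset.univ.filter (fun v => dd G v = 1) :=
        Finset.mem_filter.2 ⟨Finset.mem_univ x, hx⟩
      rw [hu, Finset.mem_singleton] at this
      exact this
    have hdeg3' : ∀ v : V, v ≠ u → dd G v = 3 := by
      intro v hv
      rcases hdeg3 v with h1 | h1
      · exact h1
      · exact absurd (huniq v h1) hv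
    -- every component contains u, so G is connected
    have hucomp : ∀ v : V, u ∈ compF G v := by
      intro v
      have hvC : v ∈ compF G v := mem_compF.2 (SimpleGraph.Reachable.refl v)
      have hCgood := compF_mem_goodSets (G := G) v
      obtain ⟨w, hw, hew⟩ := exactIndex_eq_dd_of_closed (G := G) ⟨v, hvC⟩
        (fun a ha b hb => compF_closed ha hb)
      have h1 := hF1 _ hCgood
      rw [hew, hΔv] at h1
      have h2 : dd G w = 1 := by
        rcases hdeg3 w with h3 | h3 <;> omega
      rw [← huniq w h2]
      exact hw
    have hpre : G.Preconnected := by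
      intro x y
      exact (mem_compF.1 (hucomp x)).trans (mem_compF.1 (hucomp y)).symm
    have hconn : G.Connected := ⟨hpre⟩
    -- univ is a good set of index 1
    have hugood : (Finset.univ : Finset V) ∈ goodSets G := univ_mem_goodSets hconn
    have hclU : ∀ w ∈ (Finset.univ : Finset V), ∀ x, G.Adj w x → x ∈ Finset.univ :=
      fun w _ x _ => Finset.mem_univ x
    have hiU : exactIndex G (Finset.univ : Finset V) = 1 := by
      obtain ⟨w, -, hew⟩ := exactIndex_eq_dd_of_closed (G := G) Finset.univ_nonempty hclU
      have hle := exactIndex_le_dd_of_closed (G := G) hclU (Finset.mem_univ u)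
      rw [hudeg] at hle
      rcases hdeg3 w with h1 | h1 <;> rw [h1] at hew <;> push_cast at hew hle <;> omega
    -- univ.erase u is a good set of index 1
    set S' : Finset V := Finset.univ.erase u with hS'def
    have hS'compl : S'ᶜ = {u} := by
      ext x
      rw [Finset.mem_compl, hS'def, Finset.mem_erase, Finset.mem_singleton]
      simp only [Finset.mem_univ, and_true]
      tauto
    have hS'good : S' ∈ goodSets G := by
      rw [mem_goodSets]
      constructor
      · rw [← Finset.card_pos, hS'def, Finset.card_erase_of_mem (Finset.mem_univ u),
          Finset.card_univ, hmV]
        omega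
      · exact erase_leaf_connected hconn hudeg (by omega)
    -- the neighbour of u
    obtain ⟨w0, hw0adj⟩ : ∃ w0, G.Adj u w0 := by
      have : (Finset.univ.filter (fun z => G.Adj u z)).Nonempty := by
        rw [← Finset.card_pos]
        have := hudeg; unfold dd at this; omega
      obtain ⟨w0, hw0⟩ := this
      exact ⟨w0, (Finset.mem_filter.1 hw0).2⟩
    have hw0u : w0 ≠ u := fun hc => G.irrefl (hc ▸ hw0adj)
    have hw0S' : w0 ∈ S' := Finset.mem_erase.2 ⟨hw0u, Finset.mem_univ _⟩
    have hdegOutS' : ∀ v, degOut G S' v ≤ 1 := by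
      intro v
      unfold degOut
      rw [hS'compl]
      have := Finset.card_filter_le ({u} : Finset V) (fun z => G.Adj v z)
      rw [Finset.card_singleton] at this
      exact_mod_cast this
    have hdegOutw0 : degOut G S' w0 = 1 := by
      unfold degOut
      rw [hS'compl, Finset.filter_singleton, if_pos hw0adj.symm, Finset.card_singleton]
      rfl
    have hiS' : exactIndex G S' = 1 := by
      have hub : exactIndex G S' ≤ 1 := by
        have h1 := exactIndex_le (G := G) hw0S'
        have h2 := degIn_add_degOut (G := G) S' w0
        rw [hdeg3' w0 hw0u] at h2
        omega
      obtain ⟨w, hw, hew⟩ := exists_exactIndex (G := G) ⟨w0, hw0S'⟩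
      have hwu : w ≠ u := (Finset.mem_erase.1 hw).1
      have h2 := degIn_add_degOut (G := G) S' w
      rw [hdeg3' w hwu] at h2
      have h3 := hdegOutS' w
      have h4 := degOut_nonneg (G := G) S' w
      omega
    -- two distinct good sets of index 1 = 4 - Δ contradict the top coefficient
    have hΔ1 : (4:ℤ) - (Δ:ℤ) = 1 := by rw [hΔv]; norm_num
    have hmemU : (Finset.univ : Finset V) ∈
        (goodSets G).filter (fun S => exactIndex G S = 4-(Δ:ℤ)) :=
      Finset.mem_filter.2 ⟨hugood, by rw [hΔ1]; exact hiU⟩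
    have hmemS' : S' ∈ (goodSets G).filter (fun S => exactIndex G S = 4-(Δ:ℤ)) :=
      Finset.mem_filter.2 ⟨hS'good, by rw [hΔ1]; exact hiS'⟩
    have hneq : S' ≠ (Finset.univ : Finset V) := by
      intro hc
      have : u ∈ S' := by rw [hc]; exact Finset.mem_univ u
      exact (Finset.mem_erase.1 this).1 rfl
    have hcard_one : ((goodSets G).filter (fun S => exactIndex G S = 4-(Δ:ℤ))).card ≤ 1 := by
      have : (allianceCount G (4-(Δ:ℤ)) : ℤ) = 1 := htopcount
      rw [allianceCount] at this
      omega
    exact hneq (Finset.card_le_one.1 hcard_one _ hmemS' _ hmemU)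
  · -- Δ = 4 : contradiction
    exfalso
    have hvC : vmax ∈ compF G vmax := mem_compF.2 (SimpleGraph.Reachable.refl vmax)
    have hCgood := compF_mem_goodSets (G := G) vmax
    obtain ⟨w, hw, hew⟩ := exactIndex_eq_dd_of_closed (G := G) ⟨vmax, hvC⟩
      (fun a ha b hb => compF_closed ha hb)
    have h1 := hF1 _ hCgood
    rw [hew, hΔv] at h1
    have hw0 : dd G w = 0 := by omega
    have hvw : vmax ≠ w := by
      intro hc
      rw [← hc] at hw0
      rw [← hvmax] at hw0
      omega
    have := hreach_deg hvw (mem_compF.1 hw)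
    omega
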